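/- Let E be a Banach space with a subset M ⊆ B_{E*} that is 1-norming (‖x‖ = sup_{x* ∈ M} |x*(x)| for all x ∈ E) and weak* sequentially compact. Suppose (u_n) ⊆ B_E and (u_n*) ⊆ M satisfy, for a fixed 0 < δ < 1/4: u_n*(u_n) ≥ 1 − δ for all n, (u_n*) converges weak* , and |u_n*(Σ_{m≠n} a_m u_m)| ≤ δ for all (a_m) ∈ B_{c₀} and all n. Define w_n = u_{2n} − u_{2n−1}, w_n* = (u_{2n}* − u_{2n−1}*)/2, J : c₀ → E by (a_n) ↦ Σ a_n w_n, and Q : E → c₀ by x ↦ (w_n*(x)). Then ‖I_{c₀} − QJ‖ ≤ 2δ, and hence there exists R : c₀ → c₀ with ‖R‖ ≤ (1 − 2δ)⁻¹ and R Q J = I_{c₀}. -/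

import Mathlib

open Filter Topology
open scoped ZeroAtInfty

/-- The `n`-th canonical basis vector of `c₀ = C₀(ℕ, ℝ)`. -/
noncomputable def eSeq (n : ℕ) : C₀(ℕ, ℝ) where
  toFun := fun m => if m = n then (1 : ℝ) else 0
  continuous_toFun := continuous_of_discreteTopology
  zero_at_infty' := by
    refine Filter.Tendsto.congr' ?_ tendsto_const_nhds
    filter_upwards [Filter.mem_cocompact.mpr ⟨{n}, isCompact_singleton, subset_rfl⟩] with m hm
    simp only [Set.mem_compl_iff, Set.mem_singleton_iff] at hm
    simp [hm]

noncomputable def finSupp (F : Finset ℕ) (g : ℕ → ℝ) : C₀(ℕ, ℝ) where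
  toFun := fun m => if m ∈ F then g m else 0
  continuous_toFun := continuous_of_discreteTopology
  zero_at_infty' := by
    refine Filter.Tendsto.congr' ?_ tendsto_const_nhds
    filter_upwards [Filter.mem_cocompact.mpr ⟨↑F, F.finite_toSet.isCompact, subset_rfl⟩] with m hm
    simp only [Set.mem_compl_iff, Finset.mem_coe] at hm
    simp [hm]

theorem coeff_bd (f : C₀(ℕ, ℝ)) (n : ℕ) : |f n| ≤ ‖f‖ := by
  have h := BoundedContinuousFunction.norm_coe_le_norm f.toBCF n
  rwa [ZeroAtInftyContinuousMap.norm_toBCF_eq_norm, Real.norm_eq_abs] at h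

theorem c0_norm_le (f : C₀(ℕ, ℝ)) (C : ℝ) (hC : 0 ≤ C) (h : ∀ n, |f n| ≤ C) : ‖f‖ ≤ C := by
  rw [← ZeroAtInftyContinuousMap.norm_toBCF_eq_norm]
  exact (BoundedContinuousFunction.norm_le hC).mpr (by simpa [Real.norm_eq_abs] using h)

section main
variable {E : Type*} [NormedAddCommGroup E] [NormedSpace ℝ E]
    (δ : ℝ)
    (u : ℕ → E)
    (ustar : ℕ → (E →L[ℝ] ℝ))
    (hsmall : ∀ a : C₀(ℕ, ℝ), ‖a‖ ≤ 1 → ∀ n : ℕ, ∀ s : E,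
      HasSum (fun m => if m = n then (0 : E) else a m • u m) s → |ustar n s| ≤ δ)

include hsmall in
theorem step1 : ∀ (k : ℕ) (F : Finset ℕ), k ∉ F → ∑ m ∈ F, |ustar k (u m)| ≤ δ := by
  intro k F hkF
  set sgn : ℕ → ℝ := fun m => if 0 ≤ ustar k (u m) then 1 else -1 with hsgn
  set a := finSupp F sgn with ha
  have ha_apply : ∀ m, a m = if m ∈ F then sgn m else 0 := fun m => rfl
  have hnorm : ‖a‖ ≤ 1 := by
    refine c0_norm_le a 1 one_pos.le fun m => ?_
    rw [ha_apply]
    split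
    · rw [hsgn]; dsimp only; split <;> norm_num
    · norm_num
  have hzero : ∀ m ∉ F, (if m = k then (0 : E) else a m • u m) = 0 := by
    intro m hm
    rw [ha_apply, if_neg hm, zero_smul]
    split <;> rfl
  have hs : HasSum (fun m => if m = k then (0 : E) else a m • u m)
      (∑ m ∈ F, if m = k then (0 : E) else a m • u m) := hasSum_sum_of_ne_finset_zero hzero
  have hsum_eq : (∑ m ∈ F, if m = k then (0 : E) else a m • u m) = ∑ m ∈ F, sgn m • u m := by
    refine Finset.sum_congr rfl fun m hm => ?_
    have hmk : m ≠ k := fun h => hkF (h ▸ hm)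
    rw [if_neg hmk, ha_apply, if_pos hm]
  rw [hsum_eq] at hs
  have hb := hsmall a hnorm k _ hs
  have hval : ustar k (∑ m ∈ F, sgn m • u m) = ∑ m ∈ F, |ustar k (u m)| := by
    rw [map_sum]
    refine Finset.sum_congr rfl fun m _ => ?_
    rw [map_smul, smul_eq_mul, hsgn]
    dsimp only
    split
    · rw [one_mul, abs_of_nonneg ‹_›]
    · rw [neg_one_mul, abs_of_neg (lt_of_not_ge ‹_›)]
  rw [hval, abs_of_nonneg (Finset.sum_nonneg fun m _ => abs_nonneg _)] at hb
  exact hb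

end main

section main2
variable {E : Type*} [NormedAddCommGroup E] [NormedSpace ℝ E]
    {δ : ℝ} {u : ℕ → E} {ustar : ℕ → (E →L[ℝ] ℝ)}
    (hsmall : ∀ a : C₀(ℕ, ℝ), ‖a‖ ≤ 1 → ∀ n : ℕ, ∀ s : E,
      HasSum (fun m => if m = n then (0 : E) else a m • u m) s → |ustar n s| ≤ δ)

include hsmall in
theorem dtq_key (a : C₀(ℕ, ℝ)) (k n₀ : ℕ) (τ : ℝ)
    (hbound : ∀ n, |a n * (ustar k (u (2*n+2)) - ustar k (u (2*n+1))) - (if n = n₀ then τ else 0)|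
      ≤ ‖a‖ * ((if 2*n+2 = k then 0 else |ustar k (u (2*n+2))|)
             + (if 2*n+1 = k then 0 else |ustar k (u (2*n+1))|)))
    (S : ℝ) (hS : HasSum (fun n => a n * (ustar k (u (2*n+2)) - ustar k (u (2*n+1)))) S) :
    |S - τ| ≤ δ * ‖a‖ := by
  set d : ℕ → ℝ := fun m => if m = k then 0 else |ustar k (u m)| with hd
  have hd_nn : ∀ m, 0 ≤ d m := by
    intro m; rw [hd]; dsimp only; split
    · exact le_rfl
    · exact abs_nonneg _
  have hdsum : ∀ F : Finset ℕ, ∑ m ∈ F, d m ≤ δ := by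
    intro F
    have h0 : d k = 0 := if_pos rfl
    rw [← Finset.sum_erase F h0]
    calc ∑ m ∈ F.erase k, d m = ∑ m ∈ F.erase k, |ustar k (u m)| := by
          refine Finset.sum_congr rfl fun m hm => ?_
          rw [hd]; exact if_neg (Finset.ne_of_mem_erase hm)
      _ ≤ δ := step1 δ u ustar hsmall k _ (Finset.notMem_erase k F)
  set g : ℕ → ℝ := fun n => ‖a‖ * (d (2*n+2) + d (2*n+1)) with hg
  have hgnn : ∀ n, 0 ≤ g n := fun n =>
    mul_nonneg (norm_nonneg a) (add_nonneg (hd_nn _) (hd_nn _))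
  have hgF : ∀ F : Finset ℕ, ∑ n ∈ F, g n ≤ ‖a‖ * δ := by
    intro F
    have hkey : ∑ n ∈ F, (d (2*n+2) + d (2*n+1)) ≤ δ := by
      have hi2 : Set.InjOn (fun n => 2*n+2) ↑F := fun x _ y _ h => by dsimp at h; omega
      have hi1 : Set.InjOn (fun n => 2*n+1) ↑F := fun x _ y _ h => by dsimp at h; omega
      have hdisj : Disjoint (F.image (fun n => 2*n+2)) (F.image (fun n => 2*n+1)) := by
        rw [Finset.disjoint_left]
        intro m hm2 hm1
        simp only [Finset.mem_image] at hm2 hm1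
        obtain ⟨x, _, hx⟩ := hm2; obtain ⟨y, _, hy⟩ := hm1; omega
      have heq : ∑ n ∈ F, (d (2*n+2) + d (2*n+1))
          = ∑ m ∈ F.image (fun n => 2*n+2) ∪ F.image (fun n => 2*n+1), d m := by
        rw [Finset.sum_union hdisj, Finset.sum_image (fun x hx y hy h => hi2 hx hy h),
          Finset.sum_image (fun x hx y hy h => hi1 hx hy h), ← Finset.sum_add_distrib]
      rw [heq]; exact hdsum _
    calc ∑ n ∈ F, g n = ‖a‖ * ∑ n ∈ F, (d (2*n+2) + d (2*n+1)) := by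
          rw [Finset.mul_sum]
      _ ≤ ‖a‖ * δ := mul_le_mul_of_nonneg_left hkey (norm_nonneg a)
  have hgsummable : Summable g := summable_of_sum_le hgnn hgF
  have htsum_le : ∑' n, g n ≤ ‖a‖ * δ := Summable.tsum_le_of_sum_le hgsummable hgF
  have hdiff := hS.sub (hasSum_ite_eq n₀ τ)
  have hbd := tsum_of_norm_bounded hgsummable.hasSum
    (fun n => by rw [Real.norm_eq_abs]; exact hbound n)
  rw [hdiff.tsum_eq, Real.norm_eq_abs] at hbd
  calc |S - τ| ≤ ∑' n, g n := hbd
    _ ≤ ‖a‖ * δ := htsum_le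
    _ = δ * ‖a‖ := mul_comm _ _

end main2

/-- (Dowling–Randrianantoanina–Turett, quantitative form.) Given a
1-norming weak* sequentially compact set `M ⊆ B_{E*}`, sequences `(u_n) ⊆ B_E`,
`(u_n*) ⊆ M` with `u_n*(u_n) ≥ 1 − δ`, `(u_n*)` weak* convergent, and the almost-biorthogonality
condition, the operators `J : c₀ → E`, `(a_n) ↦ Σ a_n w_n`, and `Q : E → c₀`,
`x ↦ (w_n*(x))`, built from `w_n = u_{2n} − u_{2n−1}` and `w_n* = (u_{2n}* − u_{2n−1}*)/2`,
satisfy `‖I − QJ‖ ≤ 2δ`; hence there is `R` with `‖R‖ ≤ (1 − 2δ)⁻¹` and `R Q J = I`. -/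
theorem dowling_randrianantoanina_turett_quantitative
    {E : Type*} [NormedAddCommGroup E] [NormedSpace ℝ E] [CompleteSpace E]
    (M : Set (E →L[ℝ] ℝ))
    (hMball : M ⊆ Metric.closedBall 0 1)
    (hnorming : ∀ x : E, ‖x‖ = ⨆ φ : M, |(φ : E →L[ℝ] ℝ) x|)
    (hseqcpt : ∀ φ : ℕ → (E →L[ℝ] ℝ), (∀ n, φ n ∈ M) →
      ∃ (ψ : ℕ → ℕ) (φlim : E →L[ℝ] ℝ), StrictMono ψ ∧
        ∀ v : E, Tendsto (fun n => φ (ψ n) v) atTop (𝓝 (φlim v)))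
    (δ : ℝ) (hδ0 : 0 < δ) (hδ : δ < 1 / 4)
    (u : ℕ → E) (hu : ∀ n, ‖u n‖ ≤ 1)
    (ustar : ℕ → (E →L[ℝ] ℝ)) (hustar : ∀ n, ustar n ∈ M)
    (hbi : ∀ n, 1 - δ ≤ ustar n (u n))
    (hconv : ∃ φlim : E →L[ℝ] ℝ, ∀ v : E, Tendsto (fun n => ustar n v) atTop (𝓝 (φlim v)))
    (hsmall : ∀ a : C₀(ℕ, ℝ), ‖a‖ ≤ 1 → ∀ n : ℕ, ∀ s : E,
      HasSum (fun m => if m = n then (0 : E) else a m • u m) s → |ustar n s| ≤ δ)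
    (w : ℕ → E) (hw : ∀ n, w n = u (2 * n + 2) - u (2 * n + 1))
    (wstar : ℕ → (E →L[ℝ] ℝ))
    (hwstar : ∀ n, wstar n = (2 : ℝ)⁻¹ • (ustar (2 * n + 2) - ustar (2 * n + 1)))
    (J : C₀(ℕ, ℝ) →L[ℝ] E) (hJ : ∀ a : C₀(ℕ, ℝ), HasSum (fun n => a n • w n) (J a))
    (Q : E →L[ℝ] C₀(ℕ, ℝ)) (hQ : ∀ (x : E) (n : ℕ), Q x n = wstar n x) :
    ‖ContinuousLinearMap.id ℝ C₀(ℕ, ℝ) - Q.comp J‖ ≤ 2 * δ ∧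
      ∃ R : C₀(ℕ, ℝ) →L[ℝ] C₀(ℕ, ℝ), ‖R‖ ≤ (1 - 2 * δ)⁻¹ ∧
        R.comp (Q.comp J) = ContinuousLinearMap.id ℝ C₀(ℕ, ℝ) := by
    -- basic bounds
  have hnorm_ustar : ∀ k, ‖ustar k‖ ≤ 1 := fun k => by
    have h := hMball (hustar k)
    rwa [Metric.mem_closedBall, dist_zero_right] at h
  have hdiag_le : ∀ k, ustar k (u k) ≤ 1 := fun k => by
    have h := (ustar k).le_opNorm (u k)
    have h2 : ‖ustar k‖ * ‖u k‖ ≤ 1 :=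
      (mul_le_mul (hnorm_ustar k) (hu k) (norm_nonneg _) zero_le_one).trans_eq (mul_one 1)
    exact (le_abs_self _).trans ((Real.norm_eq_abs _ ▸ h).trans h2)
  have hasSumApp : ∀ (a : C₀(ℕ, ℝ)) (k : ℕ),
      HasSum (fun n => a n * (ustar k (u (2*n+2)) - ustar k (u (2*n+1)))) (ustar k (J a)) := by
    intro a k
    have h := (hJ a).mapL (ustar k)
    have he : (fun n => ustar k (a n • w n))
        = fun n => a n * (ustar k (u (2*n+2)) - ustar k (u (2*n+1))) := by
      funext n
      rw [hw n, map_smul, map_sub, smul_eq_mul]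
    rwa [he] at h
  have even_est : ∀ (a : C₀(ℕ, ℝ)) (n : ℕ),
      |ustar (2*n+2) (J a) - a n * ustar (2*n+2) (u (2*n+2))| ≤ δ * ‖a‖ := by
    intro a n
    refine dtq_key hsmall a (2*n+2) n _ ?_ _ (hasSumApp a (2*n+2))
    intro m
    by_cases hm : m = n
    · subst hm
      rw [if_pos rfl, if_pos rfl, if_neg (by omega), zero_add]
      have hid : a m * (ustar (2*m+2) (u (2*m+2)) - ustar (2*m+2) (u (2*m+1)))
          - a m * ustar (2*m+2) (u (2*m+2)) = -(a m * ustar (2*m+2) (u (2*m+1))) := by ring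
      rw [hid, abs_neg, abs_mul]
      exact mul_le_mul_of_nonneg_right (coeff_bd a m) (abs_nonneg _)
    · rw [if_neg hm, if_neg (by omega), if_neg (by omega), sub_zero, abs_mul]
      exact mul_le_mul (coeff_bd a m) (abs_sub _ _) (abs_nonneg _) (norm_nonneg _)
  have odd_est : ∀ (a : C₀(ℕ, ℝ)) (n : ℕ),
      |ustar (2*n+1) (J a) - (-(a n) * ustar (2*n+1) (u (2*n+1)))| ≤ δ * ‖a‖ := by
    intro a n
    refine dtq_key hsmall a (2*n+1) n _ ?_ _ (hasSumApp a (2*n+1))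
    intro m
    by_cases hm : m = n
    · subst hm
      rw [if_pos rfl, if_neg (by omega), if_pos rfl, add_zero]
      have hid : a m * (ustar (2*m+1) (u (2*m+2)) - ustar (2*m+1) (u (2*m+1)))
          - (-(a m) * ustar (2*m+1) (u (2*m+1))) = a m * ustar (2*m+1) (u (2*m+2)) := by ring
      rw [hid, abs_mul]
      exact mul_le_mul_of_nonneg_right (coeff_bd a m) (abs_nonneg _)
    · rw [if_neg hm, if_neg (by omega), if_neg (by omega), sub_zero, abs_mul]
      exact mul_le_mul (coeff_bd a m) (abs_sub _ _) (abs_nonneg _) (norm_nonneg _)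
  -- pointwise estimate
  have hpt : ∀ (a : C₀(ℕ, ℝ)) (n : ℕ), |a n - Q (J a) n| ≤ 2 * δ * ‖a‖ := by
    intro a n
    have h2 := even_est a n
    have h1 := odd_est a n
    have hα1 : ustar (2*n+2) (u (2*n+2)) ≤ 1 := hdiag_le _
    have hα0 : 1 - δ ≤ ustar (2*n+2) (u (2*n+2)) := hbi _
    have hβ1 : ustar (2*n+1) (u (2*n+1)) ≤ 1 := hdiag_le _
    have hβ0 : 1 - δ ≤ ustar (2*n+1) (u (2*n+1)) := hbi _
    have hQv : Q (J a) n = 2⁻¹ * (ustar (2*n+2) (J a) - ustar (2*n+1) (J a)) := by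
      rw [hQ, hwstar]
      simp [ContinuousLinearMap.smul_apply, ContinuousLinearMap.sub_apply]
    rw [hQv]
    have hmid : |a n * (1 - (ustar (2*n+2) (u (2*n+2)) + ustar (2*n+1) (u (2*n+1)))/2)|
        ≤ ‖a‖ * δ := by
      rw [abs_mul]
      refine mul_le_mul (coeff_bd a n) ?_ (abs_nonneg _) (norm_nonneg _)
      rw [abs_of_nonneg (by linarith)]
      linarith
    have hm := abs_le.mp hmid
    have h2' := abs_le.mp h2
    have h1' := abs_le.mp h1
    rw [abs_le]
    constructor <;> nlinarith [hm.1, hm.2, h2'.1, h2'.2, h1'.1, h1'.2]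
  -- operator norm bound
  have hop : ‖ContinuousLinearMap.id ℝ C₀(ℕ, ℝ) - Q.comp J‖ ≤ 2 * δ := by
    refine ContinuousLinearMap.opNorm_le_bound _ (by positivity) fun a => ?_
    refine c0_norm_le _ _ (by positivity) fun n => ?_
    have hv : ((ContinuousLinearMap.id ℝ C₀(ℕ, ℝ) - Q.comp J) a) n = a n - Q (J a) n := by
      simp [ContinuousLinearMap.sub_apply]
    rw [hv]
    exact hpt a n
  refine ⟨hop, ?_⟩
  -- Neumann series
  haveI : Nontrivial C₀(ℕ, ℝ) := by
    refine ⟨⟨eSeq 0, 0, fun h => ?_⟩⟩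
    have h0 : (eSeq 0) 0 = (0 : C₀(ℕ, ℝ)) 0 := by rw [h]
    simp [eSeq] at h0
  set T := Q.comp J with hT
  have hop' : ‖(1 : C₀(ℕ, ℝ) →L[ℝ] C₀(ℕ, ℝ)) - T‖ ≤ 2 * δ := hop
  have hlt : ‖(1 : C₀(ℕ, ℝ) →L[ℝ] C₀(ℕ, ℝ)) - T‖ < 1 := lt_of_le_of_lt hop' (by linarith)
  set uu := Units.oneSub ((1 : C₀(ℕ, ℝ) →L[ℝ] C₀(ℕ, ℝ)) - T) hlt with huu
  refine ⟨(uu⁻¹ : _ˣ), ?_, ?_⟩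
  · have hval : ((uu⁻¹ : _ˣ) : C₀(ℕ, ℝ) →L[ℝ] C₀(ℕ, ℝ))
        = ∑' n : ℕ, ((1 : C₀(ℕ, ℝ) →L[ℝ] C₀(ℕ, ℝ)) - T) ^ n := rfl
    rw [hval]
    have hb := tsum_geometric_le_of_norm_lt_one ((1 : C₀(ℕ, ℝ) →L[ℝ] C₀(ℕ, ℝ)) - T) hlt
    rw [ContinuousLinearMap.one_def, ContinuousLinearMap.norm_id] at hb
    have hinv : (1 - ‖(1 : C₀(ℕ, ℝ) →L[ℝ] C₀(ℕ, ℝ)) - T‖)⁻¹ ≤ (1 - 2*δ)⁻¹ :=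
      inv_anti₀ (by linarith) (by linarith)
    calc ‖∑' n : ℕ, ((1 : C₀(ℕ, ℝ) →L[ℝ] C₀(ℕ, ℝ)) - T) ^ n‖
        ≤ 1 - 1 + (1 - ‖(1 : C₀(ℕ, ℝ) →L[ℝ] C₀(ℕ, ℝ)) - T‖)⁻¹ := hb
      _ ≤ (1 - 2*δ)⁻¹ := by rw [sub_self, zero_add]; exact hinv
  · have hmul : ((uu⁻¹ : _ˣ) : C₀(ℕ, ℝ) →L[ℝ] C₀(ℕ, ℝ)) * (uu : C₀(ℕ, ℝ) →L[ℝ] C₀(ℕ, ℝ)) = 1 :=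
      uu.inv_mul
    have hval : (uu : C₀(ℕ, ℝ) →L[ℝ] C₀(ℕ, ℝ)) = T := by
      rw [huu, Units.val_oneSub]
      abel
    rw [hval] at hmul
    rw [← ContinuousLinearMap.mul_def]
    exact hmul
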